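/- Let M ≥ 3 be an integer and p ∈ [0,1]. Let μ_{M,p} = (p/2)(δ_{e₃} + δ_{−e₃}) + ((1−p)/M)·Σ_{j=1}^M δ_{r_j}, where e₃ = (0,0,1) and r_j = (cos(2π(j−1)/M), sin(2π(j−1)/M), 0) are the vertices of a regular M-gon inscribed in the equator of the unit sphere S² of ℝ³. Then g*(μ_{M,p}) = √(p² + 4(1−p)²/(M² sin²(π/M))) if M is even, and g*(μ_{M,p}) = √(p² + (1−p)²/(M² sin²(π/(2M)))) if M is odd. -/

import Mathlib

open MeasureTheory Real
open scoped ENNReal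

noncomputable section

abbrev E3 := EuclideanSpace ℝ (Fin 3)

/-- The unit sphere S² in ℝ³. -/
def unitSphere : Set E3 := Metric.sphere (0 : E3) 1

/-- `g C μ` is the supremum over unit vectors `v` of `∫ √(C² + (1−C²)⟨r,v⟩²) dμ(r)`. -/
def g (C : ℝ) (μ : Measure E3) : ℝ :=
  ⨆ v : unitSphere, ∫ r, Real.sqrt (C ^ 2 + (1 - C ^ 2) * (inner ℝ r (v : E3) : ℝ) ^ 2) ∂μ


/-- `gstar μ` is the supremum over unit vectors `v` of `∫ |⟨r,v⟩| dμ(r)`. -/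
def gstar (μ : Measure E3) : ℝ :=
  ⨆ v : unitSphere, ∫ r, |(inner ℝ r (v : E3) : ℝ)| ∂μ


/-- The point `(cos φ, sin φ, 0)` on the equator of the unit sphere. -/
def eqPt (φ : ℝ) : E3 := (WithLp.equiv 2 (Fin 3 → ℝ)).symm ![Real.cos φ, Real.sin φ, 0]

/-- The uniform probability measure on the equator: the pushforward of the normalized
Lebesgue measure on `[0, 2π)` under `φ ↦ (cos φ, sin φ, 0)`. -/
def equatorUniform : Measure E3 :=
  Measure.map eqPt ((ENNReal.ofReal (2 * π))⁻¹ • volume.restrict (Set.Ico 0 (2 * π)))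

/-- The north pole `e₃ = (0,0,1)`. -/
def northPole : E3 := EuclideanSpace.single (2 : Fin 3) (1 : ℝ)

/-! ### Auxiliary trigonometric lemmas -/

open Finset

lemma PZ.abs_cos_add_nat_mul_pi (x : ℝ) (k : ℕ) : |Real.cos (x + k * π)| = |Real.cos x| := by
  induction k with
  | zero => simp
  | succ k ih =>
    have h : x + ((k : ℝ) + 1) * π = (x + k * π) + π := by ring
    push_cast
    rw [h, Real.cos_add_pi, abs_neg, ih]

/-- the partial sum function -/
def PZ.fcos (n : ℕ) (φ : ℝ) : ℝ := ∑ j ∈ range n, |Real.cos (φ + j * (π / n))|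

namespace PZ

lemma fcos_eq (n : ℕ) (hn : 1 ≤ n) (φ : ℝ) (h1 : π/2 - π/n ≤ φ) (h2 : φ ≤ π/2) :
    fcos n φ = Real.sin (φ + π/(2*n)) / Real.sin (π/(2*n)) := by
  have hn0 : (0:ℝ) < n := by exact_mod_cast hn
  have hn1 : (1:ℝ) ≤ n := by exact_mod_cast hn
  set a : ℝ := π/(2*n) with ha
  have hapos : 0 < a := by positivity
  have hsa : 0 < Real.sin a := by
    apply Real.sin_pos_of_pos_of_lt_pi hapos
    calc a ≤ π/2 := by
            rw [ha]; apply div_le_div_of_nonneg_left pi_pos.le (by norm_num) (by linarith)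
      _ < π := by linarith [pi_pos]
  have hs2a : π / n = 2 * a := by rw [ha]; field_simp
  have hpin : π / n ≤ π := by
    apply div_le_self pi_pos.le hn1
  -- signs
  have hsign : ∀ j ∈ range n, |Real.cos (φ + j * (π / n))| + Real.cos (φ + j * (π / n))
      = if j = 0 then 2 * Real.cos φ else 0 := by
    intro j hj
    rcases Nat.eq_zero_or_pos j with rfl | hj1
    · simp only [if_pos rfl, Nat.cast_zero, zero_mul, add_zero]
      have : 0 ≤ Real.cos φ := by
        apply Real.cos_nonneg_of_mem_Icc
        constructor <;> [linarith; linarith]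
      rw [abs_of_nonneg this]; norm_num; ring
    · rw [if_neg (Nat.pos_iff_ne_zero.mp hj1)]
      have hjn : (j : ℝ) ≤ n - 1 := by
        have : j ≤ n - 1 := Nat.le_sub_one_of_lt (mem_range.mp hj)
        have := Nat.cast_le (α := ℝ) |>.mpr this
        push_cast [Nat.cast_sub hn] at this ⊢
        linarith
      have hj1' : (1:ℝ) ≤ j := by exact_mod_cast hj1
      have hub : φ + j * (π / n) ≤ π + π/2 := by
        have : (j:ℝ) * (π / n) ≤ (n - 1) * (π / n) :=
          mul_le_mul_of_nonneg_right hjn (by positivity)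
        have heq : ((n:ℝ) - 1) * (π / n) = π - π / n := by field_simp
        nlinarith [pi_pos, div_pos pi_pos hn0]
      have hlb : π/2 ≤ φ + j * (π / n) := by
        have : π / n ≤ (j:ℝ) * (π / n) := le_mul_of_one_le_left (by positivity) hj1'
        linarith
      have := Real.cos_nonpos_of_pi_div_two_le_of_le hlb hub
      rw [abs_of_nonpos this]; ring
  -- sum of cosines via telescoping
  have htel : ∑ j ∈ range n, (2 * Real.sin a * Real.cos (φ + j * (π / n)))
      = -2 * Real.sin (φ - a) := by
    have : ∀ j : ℕ, 2 * Real.sin a * Real.cos (φ + j * (π / n))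
        = Real.sin (φ + (2*(j:ℝ)+1) * a) - Real.sin (φ + (2*(j:ℝ)-1) * a) := by
      intro j
      have e1 : φ + (2*(j:ℝ)+1) * a = (φ + j * (π/n)) + a := by rw [hs2a]; ring
      have e2 : φ + (2*(j:ℝ)-1) * a = (φ + j * (π/n)) - a := by rw [hs2a]; ring
      rw [e1, e2, Real.sin_add, Real.sin_sub]; ring
    calc ∑ j ∈ range n, (2 * Real.sin a * Real.cos (φ + j * (π / n)))
        = ∑ j ∈ range n, ((fun k : ℕ => Real.sin (φ + (2*(k:ℝ)-1) * a)) (j+1)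
            - (fun k : ℕ => Real.sin (φ + (2*(k:ℝ)-1) * a)) j) := by
          apply sum_congr rfl; intro j _; rw [this j]; push_cast; ring_nf
      _ = Real.sin (φ + (2*(n:ℝ)-1) * a) - Real.sin (φ + (2*(0:ℝ)-1) * a) := by
          rw [Finset.sum_range_sub (fun k : ℕ => Real.sin (φ + (2*(k:ℝ)-1) * a)) n]
          norm_num
      _ = -2 * Real.sin (φ - a) := by
          have h2na : 2 * (n:ℝ) * a = π := by rw [ha]; field_simp
          have e3 : φ + (2*(n:ℝ)-1) * a = (φ - a) + π := by rw [← h2na]; ring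
          have e4 : φ + (2*(0:ℝ)-1) * a = φ - a := by ring
          rw [e3, e4, Real.sin_add_pi]; ring
  -- combine
  have hsum : ∑ j ∈ range n, Real.cos (φ + j * (π / n)) = - Real.sin (φ - a) / Real.sin a := by
    rw [← Finset.mul_sum] at htel
    rw [eq_div_iff hsa.ne']
    linear_combination htel / 2
  have habs : fcos n φ = 2 * Real.cos φ - ∑ j ∈ range n, Real.cos (φ + j * (π / n)) := by
    have : fcos n φ + ∑ j ∈ range n, Real.cos (φ + j * (π / n))
        = ∑ j ∈ range n, (if j = 0 then 2 * Real.cos φ else 0) := by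
      rw [fcos, ← Finset.sum_add_distrib]
      exact sum_congr rfl hsign
    rw [Finset.sum_ite_eq' (range n) 0 (fun _ => 2 * Real.cos φ)] at this
    rw [if_pos (mem_range.mpr (by omega))] at this
    linarith
  rw [habs, hsum]
  rw [Real.sin_add, Real.sin_sub]
  field_simp
  ring

lemma fcos_periodic (n : ℕ) (hn : 1 ≤ n) : Function.Periodic (fcos n) (π / n) := by
  intro φ
  have hn0 : ((n:ℝ)) ≠ 0 := by positivity
  unfold fcos
  have hterm : ∀ j : ℕ, |Real.cos (φ + π/n + j * (π/n))| = (fun k : ℕ => |Real.cos (φ + k * (π/n))|) (j+1) := by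
    intro j; simp only; push_cast; ring_nf
  calc ∑ j ∈ range n, |Real.cos (φ + π/n + j * (π/n))|
      = ∑ j ∈ range n, (fun k : ℕ => |Real.cos (φ + k * (π/n))|) (j+1) :=
        sum_congr rfl (fun j _ => hterm j)
    _ = ∑ j ∈ range (n+1), |Real.cos (φ + j * (π/n))| - |Real.cos (φ + (0:ℕ) * (π/n))| := by
        rw [Finset.sum_range_succ' (fun k : ℕ => |Real.cos (φ + k * (π/n))|) n]; ring
    _ = ∑ j ∈ range n, |Real.cos (φ + j * (π/n))| := by
        rw [Finset.sum_range_succ]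
        have : φ + (n:ℝ) * (π/n) = φ + π := by field_simp
        rw [this, Real.cos_add_pi]
        simp [abs_neg]

lemma fcos_le (n : ℕ) (hn : 1 ≤ n) (φ : ℝ) : fcos n φ ≤ 1 / Real.sin (π/(2*n)) := by
  have hn0 : (0:ℝ) < n := by exact_mod_cast hn
  have hT : (0:ℝ) < π / n := by positivity
  have hsa : 0 < Real.sin (π/(2*n)) := by
    apply Real.sin_pos_of_pos_of_lt_pi (by positivity)
    have : π/(2*(n:ℝ)) ≤ π/2 := by
      apply div_le_div_of_nonneg_left pi_pos.le (by norm_num) (by exact_mod_cast by linarith : (2:ℝ) ≤ 2*n)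
    linarith [pi_pos]
  set ψ := toIcoMod hT (π/2 - π/n) φ with hψ
  have hmem := toIcoMod_mem_Ico hT (π/2 - π/n) φ
  have hval : fcos n ψ = fcos n φ := by
    rw [hψ, ← self_sub_toIcoDiv_zsmul hT (π/2 - π/n) φ]
    exact (fcos_periodic n hn).sub_zsmul_eq _
  have h1 : π/2 - π/n ≤ ψ := hmem.1
  have h2 : ψ ≤ π/2 := by
    have h := hmem.2
    have : π/2 - π/n + π/n = π/2 := by ring
    rw [this] at h
    exact h.le
  rw [← hval, fcos_eq n hn ψ h1 h2]
  gcongr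
  exact Real.sin_le_one _

lemma fcos_max (n : ℕ) (hn : 1 ≤ n) : fcos n (π/2 - π/(2*n)) = 1 / Real.sin (π/(2*n)) := by
  have hn0 : (0:ℝ) < n := by exact_mod_cast hn
  have ha : 0 < π/(2*(n:ℝ)) := by positivity
  have hle : π/(2*(n:ℝ)) ≤ π/n := by
    apply div_le_div_of_nonneg_left pi_pos.le (by positivity) (by linarith)
  have h := fcos_eq n hn (π/2 - π/(2*n)) (by linarith) (by linarith)
  rw [h]
  have : π/2 - π/(2*(n:ℝ)) + π/(2*n) = π/2 := by ring
  rw [this, Real.sin_pi_div_two]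

def gonSum (M : ℕ) (θ : ℝ) : ℝ := ∑ j ∈ range M, |Real.cos (θ + 2*π*j/M)|

lemma gonSum_even (n : ℕ) (hn : 1 ≤ n) (θ : ℝ) : gonSum (2*n) θ = 2 * fcos n θ := by
  have hn0 : ((n:ℝ)) ≠ 0 := by positivity
  have hang : ∀ j : ℕ, (2*π*(j:ℝ)/((2*n:ℕ):ℝ)) = j * (π/n) := by
    intro j; push_cast; field_simp
  unfold gonSum fcos
  have hsplit : ∑ j ∈ range (2*n), |Real.cos (θ + 2*π*j/((2*n:ℕ):ℝ))|
      = ∑ j ∈ range n, |Real.cos (θ + 2*π*j/((2*n:ℕ):ℝ))|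
        + ∑ j ∈ range n, |Real.cos (θ + 2*π*((n+j:ℕ):ℝ)/((2*n:ℕ):ℝ))| := by
    rw [two_mul, Finset.sum_range_add]
  rw [hsplit]
  have e1 : ∀ j ∈ range n, |Real.cos (θ + 2*π*(j:ℝ)/((2*n:ℕ):ℝ))| = |Real.cos (θ + j * (π/n))| := by
    intro j _; rw [hang]
  have e2 : ∀ j ∈ range n, |Real.cos (θ + 2*π*((n+j:ℕ):ℝ)/((2*n:ℕ):ℝ))| = |Real.cos (θ + j * (π/n))| := by
    intro j _
    rw [hang]
    have : θ + ((n+j:ℕ):ℝ) * (π/n) = (θ + j * (π/n)) + π := by push_cast; field_simp; ring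
    rw [this, Real.cos_add_pi, abs_neg]
  rw [Finset.sum_congr rfl e1, Finset.sum_congr rfl e2]
  ring

lemma gonSum_odd (M : ℕ) (hM : Odd M) (hM1 : 1 ≤ M) (θ : ℝ) : gonSum M θ = fcos M θ := by
  have hM0 : ((M:ℝ)) ≠ 0 := by positivity
  unfold gonSum fcos
  apply Finset.sum_nbij' (i := fun j => (2*j) % M) (j := fun k => ((M+1)/2 * k) % M)
  · intro a ha; exact mem_range.mpr (Nat.mod_lt _ (by omega))
  · intro a ha; exact mem_range.mpr (Nat.mod_lt _ (by omega))
  · intro a ha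
    have hc : (M+1)/2 * 2 = M + 1 := Nat.div_mul_cancel hM.add_one.two_dvd
    have h1 : (M+1)/2 * ((2*a) % M) % M = (M+1)/2 * (2*a) % M :=
      ((Nat.mod_modEq (2*a) M).mul_left ((M+1)/2) : _)
    have h2 : (M+1)/2 * (2*a) = a + M*a := by
      calc (M+1)/2 * (2*a) = ((M+1)/2 * 2) * a := by ring
        _ = (M+1) * a := by rw [hc]
        _ = a + M*a := by ring
    calc (M+1)/2 * ((2*a) % M) % M = (M+1)/2 * (2*a) % M := h1
      _ = (a + M*a) % M := by rw [h2]
      _ = a % M := Nat.add_mul_mod_self_left a M a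
      _ = a := Nat.mod_eq_of_lt (mem_range.mp ha)
  · intro k hk
    have hc : (M+1)/2 * 2 = M + 1 := Nat.div_mul_cancel hM.add_one.two_dvd
    have h1 : 2 * ((M+1)/2 * k % M) % M = 2 * ((M+1)/2 * k) % M :=
      ((Nat.mod_modEq ((M+1)/2 * k) M).mul_left 2 : _)
    have h2 : 2 * ((M+1)/2 * k) = k + M*k := by
      calc 2 * ((M+1)/2 * k) = ((M+1)/2 * 2) * k := by ring
        _ = (M+1) * k := by rw [hc]
        _ = k + M*k := by ring
    calc 2 * ((M+1)/2 * k % M) % M = 2 * ((M+1)/2 * k) % M := h1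
      _ = (k + M*k) % M := by rw [h2]
      _ = k % M := Nat.add_mul_mod_self_left k M k
      _ = k := Nat.mod_eq_of_lt (mem_range.mp hk)
  · intro a ha
    have hdm := Nat.div_add_mod (2*a) M
    have : θ + 2*π*(a:ℝ)/M = (θ + ((2*a) % M : ℕ) * (π/M)) + ((2*a)/M : ℕ) * π := by
      have hcast : ((2*a : ℕ):ℝ) = (M:ℝ) * ((2*a)/M : ℕ) + ((2*a) % M : ℕ) := by
        exact_mod_cast congrArg (Nat.cast (R := ℝ)) hdm.symm
      push_cast at hcast ⊢
      field_simp
      linear_combination π * hcast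
    rw [this, PZ.abs_cos_add_nat_mul_pi]

def Qv (M : ℕ) : ℝ := if Even M then 2 / Real.sin (π/M) else 1 / Real.sin (π/(2*M))

lemma gonSum_le (M : ℕ) (hM : 3 ≤ M) (θ : ℝ) : gonSum M θ ≤ Qv M := by
  rcases Nat.even_or_odd M with he | ho
  · obtain ⟨n, hn⟩ := he
    have hn1 : 1 ≤ n := by omega
    have hMn : M = 2*n := by omega
    have hcast : ((M:ℝ)) = 2*(n:ℝ) := by rw [hMn]; push_cast; ring
    rw [Qv, if_pos (by exact ⟨n, hn⟩), hMn, gonSum_even n hn1 θ]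
    have := fcos_le n hn1 θ
    have he2 : π/((2*n:ℕ):ℝ) = π/(2*(n:ℝ)) := by push_cast; ring_nf
    calc 2 * fcos n θ ≤ 2 * (1 / Real.sin (π/(2*n))) := by linarith
      _ = 2 / Real.sin (π/((2*n:ℕ):ℝ)) := by rw [he2]; ring
  · rw [Qv, if_neg (by simpa using ho), gonSum_odd M ho (by omega) θ]
    exact fcos_le M (by omega) θ

lemma gonSum_exists_max (M : ℕ) (hM : 3 ≤ M) : ∃ θ, gonSum M θ = Qv M := by
  rcases Nat.even_or_odd M with he | ho
  · obtain ⟨n, hn⟩ := he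
    have hn1 : 1 ≤ n := by omega
    have hMn : M = 2*n := by omega
    refine ⟨π/2 - π/(2*n), ?_⟩
    rw [Qv, if_pos (by exact ⟨n, hn⟩), hMn, gonSum_even n hn1 _, fcos_max n hn1]
    have he2 : π/((2*n:ℕ):ℝ) = π/(2*(n:ℝ)) := by push_cast; ring_nf
    rw [he2]; ring
  · refine ⟨π/2 - π/(2*M), ?_⟩
    rw [Qv, if_neg (by simpa using ho), gonSum_odd M ho (by omega) _, fcos_max M (by omega)]

lemma Qv_pos (M : ℕ) (hM : 3 ≤ M) : 0 < Qv M := by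
  have hM0 : (0:ℝ) < M := by exact_mod_cast by omega
  have h1 : 0 < Real.sin (π/M) := by
    apply Real.sin_pos_of_pos_of_lt_pi (by positivity)
    calc π/(M:ℝ) ≤ π/3 := by
          apply div_le_div_of_nonneg_left pi_pos.le (by norm_num) (by exact_mod_cast hM)
      _ < π := by linarith [pi_pos]
  have h2 : 0 < Real.sin (π/(2*M)) := by
    apply Real.sin_pos_of_pos_of_lt_pi (by positivity)
    calc π/(2*(M:ℝ)) ≤ π/6 := by
          apply div_le_div_of_nonneg_left pi_pos.le (by norm_num) (by exact_mod_cast by omega : (6:ℝ) ≤ 2*M)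
      _ < π := by linarith [pi_pos]
  unfold Qv; split <;> positivity

lemma exists_polar (x y : ℝ) :
    ∃ ψ : ℝ, x = Real.sqrt (x^2+y^2) * Real.cos ψ ∧ y = Real.sqrt (x^2+y^2) * Real.sin ψ := by
  by_cases h : x = 0 ∧ y = 0
  · exact ⟨0, by simp [h.1, h.2]⟩
  · set z : ℂ := ⟨x, y⟩ with hz
    have hz0 : z ≠ 0 := by
      intro hc
      rw [Complex.ext_iff] at hc
      simp only [hz, Complex.zero_re, Complex.zero_im] at hc
      exact h ⟨hc.1, hc.2⟩
    have habs : ‖z‖ = Real.sqrt (x^2+y^2) := by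
      rw [Complex.norm_def, Complex.normSq_mk]; ring_nf
    refine ⟨Complex.arg z, ?_, ?_⟩
    · rw [Complex.cos_arg hz0, ← habs]
      field_simp [norm_ne_zero_iff.mpr hz0]
      rfl
    · rw [Complex.sin_arg, ← habs]
      field_simp [norm_ne_zero_iff.mpr hz0]
      rfl

lemma equator_le (M : ℕ) (hM : 3 ≤ M) (x y : ℝ) :
    ∑ j ∈ range M, |Real.cos (2*π*j/M) * x + Real.sin (2*π*j/M) * y|
      ≤ Qv M * Real.sqrt (x^2+y^2) := by
  obtain ⟨ψ, hx, hy⟩ := exists_polar x y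
  set ρ := Real.sqrt (x^2+y^2) with hρdef
  have hρ : 0 ≤ ρ := Real.sqrt_nonneg _
  have hterm : ∀ j : ℕ, |Real.cos (2*π*j/M) * x + Real.sin (2*π*j/M) * y|
      = ρ * |Real.cos (-ψ + 2*π*j/M)| := by
    intro j
    rw [hx, hy]
    have h1 : Real.cos (2*π*j/M) * (ρ * Real.cos ψ) + Real.sin (2*π*j/M) * (ρ * Real.sin ψ)
        = ρ * Real.cos (2*π*j/M - ψ) := by rw [Real.cos_sub]; ring
    have h2 : 2*π*(j:ℝ)/M - ψ = -ψ + 2*π*j/M := by ring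
    rw [h1, h2, abs_mul, abs_of_nonneg hρ]
  calc ∑ j ∈ range M, |Real.cos (2*π*j/M) * x + Real.sin (2*π*j/M) * y|
      = ρ * gonSum M (-ψ) := by
        rw [gonSum, Finset.mul_sum]
        exact sum_congr rfl (fun j _ => hterm j)
    _ ≤ ρ * Qv M := mul_le_mul_of_nonneg_left (gonSum_le M hM _) hρ
    _ = Qv M * ρ := by ring

lemma equator_max (M : ℕ) (hM : 3 ≤ M) :
    ∃ x y : ℝ, x^2 + y^2 = 1 ∧
      ∑ j ∈ range M, |Real.cos (2*π*j/M) * x + Real.sin (2*π*j/M) * y| = Qv M := by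
  obtain ⟨θ, hθ⟩ := gonSum_exists_max M hM
  refine ⟨Real.cos (-θ), Real.sin (-θ), by rw [← Real.sin_sq_add_cos_sq (-θ)]; ring, ?_⟩
  rw [← hθ, gonSum]
  apply sum_congr rfl
  intro j _
  have : Real.cos (2*π*j/M) * Real.cos (-θ) + Real.sin (2*π*j/M) * Real.sin (-θ)
      = Real.cos (2*π*(j:ℝ)/M - -θ) := by rw [Real.cos_sub]
  rw [this]
  congr 1
  ring

lemma sin_pi_div_pos (M : ℕ) (hM : 3 ≤ M) : 0 < Real.sin (π/(M:ℝ)) := by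
  have hM0 : (0:ℝ) < M := by exact_mod_cast by omega
  apply Real.sin_pos_of_pos_of_lt_pi (by positivity)
  calc π/(M:ℝ) ≤ π/3 := by
        apply div_le_div_of_nonneg_left pi_pos.le (by norm_num) (by exact_mod_cast hM)
    _ < π := by linarith [pi_pos]

lemma sin_pi_div_two_mul_pos (M : ℕ) (hM : 3 ≤ M) : 0 < Real.sin (π/(2*(M:ℝ))) := by
  have hM0 : (0:ℝ) < M := by exact_mod_cast by omega
  apply Real.sin_pos_of_pos_of_lt_pi (by positivity)
  calc π/(2*(M:ℝ)) ≤ π/6 := by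
        apply div_le_div_of_nonneg_left pi_pos.le (by norm_num) (by exact_mod_cast by omega : (6:ℝ) ≤ 2*M)
    _ < π := by linarith [pi_pos]

lemma final_even (M : ℕ) (hM : 3 ≤ M) (p : ℝ) (he : Even M) :
    p^2 + ((1-p) * Qv M / M)^2 = p^2 + 4*(1-p)^2/((M:ℝ)^2 * Real.sin (π/M)^2) := by
  have hM0 : (0:ℝ) < M := by exact_mod_cast by omega
  have hs := (sin_pi_div_pos M hM).ne'
  rw [Qv, if_pos he]
  field_simp
  ring

lemma final_odd (M : ℕ) (hM : 3 ≤ M) (p : ℝ) (ho : ¬ Even M) :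
    p^2 + ((1-p) * Qv M / M)^2 = p^2 + (1-p)^2/((M:ℝ)^2 * Real.sin (π/(2*M))^2) := by
  have hM0 : (0:ℝ) < M := by exact_mod_cast by omega
  have hs := (sin_pi_div_two_mul_pos M hM).ne'
  rw [Qv, if_neg ho]
  field_simp

end PZ

open PZ in
/-- For an integer `M ≥ 3` and `p ∈ [0,1]`, consider the polygon+Z measure
`μ_{M,p} = (p/2)(δ_{e₃} + δ_{−e₃}) + ((1−p)/M)·Σ_{j=1}^M δ_{r_j}`, where the `r_j` are the
vertices of a regular `M`-gon inscribed in the equator of the unit sphere S² of ℝ³.  Then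
`g*(μ_{M,p}) = √(p² + 4(1−p)²/(M²sin²(π/M)))` when `M` is even, and
`g*(μ_{M,p}) = √(p² + (1−p)²/(M²sin²(π/(2M))))` when `M` is odd. -/
theorem gstar_polygonZ (M : ℕ) (hM : 3 ≤ M) (p : ℝ) (hp : p ∈ Set.Icc (0 : ℝ) 1) :
    gstar (ENNReal.ofReal (p / 2) • (Measure.dirac northPole + Measure.dirac (-northPole))
        + ENNReal.ofReal ((1 - p) / M) • ∑ j : Fin M, Measure.dirac (eqPt (2 * π * (j : ℕ) / M)))
      = if Even M then Real.sqrt (p ^ 2 + 4 * (1 - p) ^ 2 / ((M : ℝ) ^ 2 * Real.sin (π / M) ^ 2))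
        else Real.sqrt (p ^ 2 + (1 - p) ^ 2 / ((M : ℝ) ^ 2 * Real.sin (π / (2 * M)) ^ 2)) := by
  have hM0 : (0:ℝ) < M := by exact_mod_cast by omega
  have hp0 := hp.1
  have hp1 := hp.2
  have h1p : (0:ℝ) ≤ 1 - p := by linarith
  set μ := ENNReal.ofReal (p / 2) • (Measure.dirac northPole + Measure.dirac (-northPole))
      + ENNReal.ofReal ((1 - p) / M) • ∑ j : Fin M, Measure.dirac (eqPt (2 * π * (j : ℕ) / M)) with hμ
  -- integral computation
  have hI : ∀ v : E3, (∫ r, |(inner ℝ r v : ℝ)| ∂μ)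
      = p * |v 2| + ((1-p)/M) * ∑ j ∈ Finset.range M,
          |Real.cos (2*π*j/M) * v 0 + Real.sin (2*π*j/M) * v 1| := by
    intro v
    have hcont : Continuous fun r : E3 => |(inner ℝ r v : ℝ)| :=
      (continuous_id.inner continuous_const).abs
    have hint : ∀ a : E3, Integrable (fun r : E3 => |(inner ℝ r v : ℝ)|) (Measure.dirac a) :=
      fun a => (integrable_const _).congr (ae_eq_dirac' hcont.measurable).symm
    have hintsum : Integrable (fun r : E3 => |(inner ℝ r v : ℝ)|)
        (∑ j : Fin M, Measure.dirac (eqPt (2 * π * (j : ℕ) / M))) := by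
      apply integrable_finset_sum_measure.mpr
      intro j _; exact hint _
    rw [hμ, integral_add_measure
        ((((hint _).add_measure (hint _))).smul_measure ENNReal.ofReal_ne_top)
        (hintsum.smul_measure ENNReal.ofReal_ne_top),
      integral_smul_measure, integral_smul_measure,
      integral_add_measure (hint _) (hint _),
      integral_finset_sum_measure (fun j _ => hint _)]
    have h0p : (0:ℝ) ≤ p/2 := by linarith
    have h1p' : (0:ℝ) ≤ (1-p)/M := by positivity
    rw [ENNReal.toReal_ofReal h0p, ENNReal.toReal_ofReal h1p']
    simp only [integral_dirac]
    have e1 : |(inner ℝ northPole v : ℝ)| = |v 2| := by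
      simp [northPole, EuclideanSpace.inner_single_left]
    have e2 : |(inner ℝ (-northPole) v : ℝ)| = |v 2| := by
      rw [inner_neg_left]
      simp [northPole, EuclideanSpace.inner_single_left]
    have e3 : ∀ j : Fin M, |(inner ℝ (eqPt (2 * π * (j:ℕ) / M)) v : ℝ)|
        = |Real.cos (2*π*(j:ℕ)/M) * v 0 + Real.sin (2*π*(j:ℕ)/M) * v 1| := by
      intro j
      simp [eqPt, PiLp.inner_apply, RCLike.inner_apply, Fin.sum_univ_three]
      ring_nf
    rw [e1, e2]
    rw [Finset.sum_congr rfl (fun j _ => e3 j), Fin.sum_univ_eq_sum_range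
      (fun j => |Real.cos (2*π*(j:ℕ)/M) * v 0 + Real.sin (2*π*(j:ℕ)/M) * v 1|) M]
    simp only [smul_eq_mul]
    ring
  -- the target value
  set c : ℝ := (1-p) * Qv M / M with hc
  have hQpos := Qv_pos M hM
  have hc0 : 0 ≤ c := by rw [hc]; positivity
  set T : ℝ := Real.sqrt (p^2 + c^2) with hT
  have hpc : 0 < p^2 + c^2 := by
    rcases lt_or_eq_of_le hp0 with hlt | heq
    · positivity
    · have hcpos : 0 < c := by
        rw [hc, ← heq]
        have h9 : (1 - (0:ℝ)) * Qv M = Qv M := by ring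
        rw [h9]
        exact div_pos hQpos hM0
      nlinarith [sq_nonneg p]
  have hTpos : 0 < T := Real.sqrt_pos.mpr hpc
  have hT2 : T^2 = p^2 + c^2 := Real.sq_sqrt hpc.le
  -- upper bound
  have hub : ∀ v : unitSphere, (∫ r, |(inner ℝ r ((v:E3)) : ℝ)| ∂μ) ≤ T := by
    rintro ⟨v, hv⟩
    have hnorm : v 0 ^2 + v 1 ^2 + v 2 ^2 = 1 := by
      have h1 : ‖v‖ = 1 := by
        have := hv
        rw [unitSphere, Metric.mem_sphere, dist_zero_right] at this
        exact this
      rw [EuclideanSpace.norm_eq] at h1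
      have h2 : ∑ i, ‖v i‖^2 = 1 := Real.sqrt_eq_one.mp h1
      simpa [Fin.sum_univ_three, sq_abs, Real.norm_eq_abs] using h2
    rw [hI v]
    have hS := equator_le M hM (v 0) (v 1)
    set Y := Real.sqrt (v 0 ^2 + v 1 ^2) with hY
    have hY0 : 0 ≤ Y := Real.sqrt_nonneg _
    have hY2 : Y^2 = v 0 ^2 + v 1 ^2 := Real.sq_sqrt (by positivity)
    set X := |v 2| with hX
    have hX0 : 0 ≤ X := abs_nonneg _
    have hX2 : X^2 = v 2 ^2 := sq_abs _
    have hXY : X^2 + Y^2 = 1 := by rw [hX2, hY2]; linarith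
    have step1 : p * |v 2| + ((1-p)/M) * ∑ j ∈ Finset.range M,
        |Real.cos (2*π*j/M) * v 0 + Real.sin (2*π*j/M) * v 1| ≤ p * X + c * Y := by
      have : ((1-p)/M) * ∑ j ∈ Finset.range M,
          |Real.cos (2*π*j/M) * v 0 + Real.sin (2*π*j/M) * v 1|
          ≤ ((1-p)/M) * (Qv M * Y) := by
        apply mul_le_mul_of_nonneg_left hS (by positivity)
      have hceq : ((1-p)/M) * (Qv M * Y) = c * Y := by rw [hc]; ring
      linarith [this, hceq ▸ this]
    have step2 : p * X + c * Y ≤ T := by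
      have hsq : (p*X + c*Y)^2 ≤ p^2 + c^2 := by nlinarith [sq_nonneg (p*Y - c*X)]
      have hnn : 0 ≤ p*X + c*Y := by positivity
      calc p*X + c*Y = Real.sqrt ((p*X + c*Y)^2) := (Real.sqrt_sq hnn).symm
        _ ≤ Real.sqrt (p^2 + c^2) := Real.sqrt_le_sqrt hsq
    linarith
  -- maximizer
  obtain ⟨x, y, hxy1, hxymax⟩ := equator_max M hM
  set w : E3 := (WithLp.equiv 2 (Fin 3 → ℝ)).symm ![c/T * x, c/T * y, p/T] with hw
  have hw0 : w 0 = c/T * x := rfl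
  have hw1 : w 1 = c/T * y := rfl
  have hw2 : w 2 = p/T := rfl
  have hwmem : w ∈ unitSphere := by
    have hn1 : ‖w‖ = 1 := by
      rw [EuclideanSpace.norm_eq]
      have h5 : ∑ i, ‖w i‖^2 = 1 := by
        rw [Fin.sum_univ_three, hw0, hw1, hw2]
        simp only [Real.norm_eq_abs, sq_abs]
        calc (c/T*x)^2 + (c/T*y)^2 + (p/T)^2
            = (c^2*(x^2+y^2) + p^2)/T^2 := by field_simp
          _ = (p^2+c^2)/(p^2+c^2) := by rw [hxy1, hT2]; ring_nf
          _ = 1 := div_self hpc.ne'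
      rw [h5, Real.sqrt_one]
    rw [unitSphere, Metric.mem_sphere, dist_zero_right]
    exact hn1
  have hwval : (∫ r, |(inner ℝ r w : ℝ)| ∂μ) = T := by
    rw [hI w, hw0, hw1, hw2]
    have habs2 : |p/T| = p/T := abs_of_nonneg (by positivity)
    have hterm : ∀ j : ℕ, |Real.cos (2*π*j/M) * (c/T * x) + Real.sin (2*π*j/M) * (c/T * y)|
        = (c/T) * |Real.cos (2*π*j/M) * x + Real.sin (2*π*j/M) * y| := by
      intro j
      have h7 : Real.cos (2*π*j/M) * (c/T * x) + Real.sin (2*π*j/M) * (c/T * y)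
          = (c/T) * (Real.cos (2*π*j/M) * x + Real.sin (2*π*j/M) * y) := by ring
      rw [h7, abs_mul, abs_of_nonneg (show (0:ℝ) ≤ c/T by positivity)]
    rw [habs2, Finset.sum_congr rfl (fun j _ => hterm j), ← Finset.mul_sum, hxymax]
    have : p * (p/T) + ((1-p)/M) * ((c/T) * Qv M) = (p^2 + c^2)/T := by
      rw [hc]; field_simp
    rw [this, ← hT2, sq, mul_div_assoc, div_self hTpos.ne', mul_one]
  -- conclude the supremum
  haveI : Nonempty unitSphere := ⟨⟨northPole, by
    rw [unitSphere, Metric.mem_sphere, dist_zero_right, northPole,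
      EuclideanSpace.norm_single, norm_one]⟩⟩
  have hbdd : BddAbove (Set.range fun v : unitSphere => ∫ r, |(inner ℝ r ((v:E3)) : ℝ)| ∂μ) := by
    refine ⟨T, ?_⟩
    rintro _ ⟨v, rfl⟩
    exact hub v
  have hsup : gstar μ = T := by
    apply le_antisymm
    · exact ciSup_le hub
    · have := le_ciSup hbdd (⟨w, hwmem⟩ : unitSphere)
      rw [hwval] at this
      exact this
  rw [hsup, hT]
  rcases Nat.even_or_odd M with he | ho
  · rw [if_pos he]
    congr 1
    rw [hc]
    exact final_even M hM p he
  · rw [if_neg (by simpa using ho)]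
    congr 1
    rw [hc]
    exact final_odd M hM p (by simpa using ho)
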